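/- Let $B$ be a real $3 \times 3$ matrix with singular values $B_1 \leq B_2 \leq B_3$, and let $A_1 \leq A_2$, $C_1 \leq C_2$ be real numbers with $A_1 + A_2 > 0$ and $C_1 + C_2 > 0$. Define $E = \frac{4 B_1 (B_3 - B_2)}{B_3} + \frac{(A_1 - B_1)^2 + (A_2 - B_2)^2 + 2 A_2 (B_2 - B_1)}{A_1 + A_2} + \frac{(C_1 - B_1)^2 + (C_2 - B_2)^2 + 2 C_2 (C_2' := B_2 - B_1)}{C_1 + C_2}$ (with $B_3 > 0$ and $B_1 \geq 0$). Then $E \geq 0$, and $E = 0$ implies $A_1 = A_2 = C_1 = C_2 = B_1 = B_2 = B_3$. -/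

import Mathlib

set_option maxHeartbeats 1000000 in
theorem stmt_9 (B₁ B₂ B₃ A₁ A₂ C₁ C₂ : ℝ)
    (hB1 : 0 ≤ B₁) (hB12 : B₁ ≤ B₂) (hB23 : B₂ ≤ B₃) (hB3 : 0 < B₃)
    (hA : A₁ ≤ A₂) (hC : C₁ ≤ C₂) (hApos : 0 < A₁ + A₂) (hCpos : 0 < C₁ + C₂) :
    0 ≤ 4 * B₁ * (B₃ - B₂) / B₃
        + ((A₁ - B₁)^2 + (A₂ - B₂)^2 + 2 * A₂ * (B₂ - B₁)) / (A₁ + A₂)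
        + ((C₁ - B₁)^2 + (C₂ - B₂)^2 + 2 * C₂ * (B₂ - B₁)) / (C₁ + C₂) ∧
      (4 * B₁ * (B₃ - B₂) / B₃
        + ((A₁ - B₁)^2 + (A₂ - B₂)^2 + 2 * A₂ * (B₂ - B₁)) / (A₁ + A₂)
        + ((C₁ - B₁)^2 + (C₂ - B₂)^2 + 2 * C₂ * (B₂ - B₁)) / (C₁ + C₂) = 0 →
        A₁ = A₂ ∧ A₂ = C₁ ∧ C₁ = C₂ ∧ C₂ = B₁ ∧ B₁ = B₂ ∧ B₂ = B₃) := by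
  have hA2 : 0 < A₂ := by linarith
  have hC2 : 0 < C₂ := by linarith
  have h1n : 0 ≤ 4 * B₁ * (B₃ - B₂) := by nlinarith
  have h2n : 0 ≤ (A₁ - B₁)^2 + (A₂ - B₂)^2 + 2 * A₂ * (B₂ - B₁) := by nlinarith [sq_nonneg (A₁ - B₁), sq_nonneg (A₂ - B₂)]
  have h3n : 0 ≤ (C₁ - B₁)^2 + (C₂ - B₂)^2 + 2 * C₂ * (B₂ - B₁) := by nlinarith [sq_nonneg (C₁ - B₁), sq_nonneg (C₂ - B₂)]
  have t1 : 0 ≤ 4 * B₁ * (B₃ - B₂) / B₃ := div_nonneg h1n hB3.le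
  have t2 : 0 ≤ ((A₁ - B₁)^2 + (A₂ - B₂)^2 + 2 * A₂ * (B₂ - B₁)) / (A₁ + A₂) := div_nonneg h2n hApos.le
  have t3 : 0 ≤ ((C₁ - B₁)^2 + (C₂ - B₂)^2 + 2 * C₂ * (B₂ - B₁)) / (C₁ + C₂) := div_nonneg h3n hCpos.le
  refine ⟨by linarith, fun h => ?_⟩
  have e1 : 4 * B₁ * (B₃ - B₂) / B₃ = 0 := le_antisymm (by linarith) t1
  have e2 : ((A₁ - B₁)^2 + (A₂ - B₂)^2 + 2 * A₂ * (B₂ - B₁)) / (A₁ + A₂) = 0 := le_antisymm (by linarith) t2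
  have e3 : ((C₁ - B₁)^2 + (C₂ - B₂)^2 + 2 * C₂ * (B₂ - B₁)) / (C₁ + C₂) = 0 := le_antisymm (by linarith) t3
  have n1 : 4 * B₁ * (B₃ - B₂) = 0 := by
    field_simp at e1; linear_combination e1
  have n2 : (A₁ - B₁)^2 + (A₂ - B₂)^2 + 2 * A₂ * (B₂ - B₁) = 0 := by
    field_simp at e2; linear_combination e2
  have n3 : (C₁ - B₁)^2 + (C₂ - B₂)^2 + 2 * C₂ * (B₂ - B₁) = 0 := by
    field_simp at e3; linear_combination e3
  have hAmix : 0 ≤ 2 * A₂ * (B₂ - B₁) := by nlinarith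
  have hCmix : 0 ≤ 2 * C₂ * (B₂ - B₁) := by nlinarith
  have sA1 : (A₁ - B₁)^2 = 0 := le_antisymm (by nlinarith [sq_nonneg (A₂ - B₂)]) (sq_nonneg _)
  have sA2 : (A₂ - B₂)^2 = 0 := le_antisymm (by nlinarith [sq_nonneg (A₁ - B₁)]) (sq_nonneg _)
  have sAm : 2 * A₂ * (B₂ - B₁) = 0 := by linarith
  have sC1 : (C₁ - B₁)^2 = 0 := le_antisymm (by nlinarith [sq_nonneg (C₂ - B₂)]) (sq_nonneg _)
  have sC2 : (C₂ - B₂)^2 = 0 := le_antisymm (by nlinarith [sq_nonneg (C₁ - B₁)]) (sq_nonneg _)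
  have hAB1 : A₁ = B₁ := by have := pow_eq_zero_iff (n := 2) (by norm_num) |>.mp sA1; linarith [sub_eq_zero.mp this]
  have hAB2 : A₂ = B₂ := by have := pow_eq_zero_iff (n := 2) (by norm_num) |>.mp sA2; linarith [sub_eq_zero.mp this]
  have hCB1 : C₁ = B₁ := by have := pow_eq_zero_iff (n := 2) (by norm_num) |>.mp sC1; linarith [sub_eq_zero.mp this]
  have hCB2 : C₂ = B₂ := by have := pow_eq_zero_iff (n := 2) (by norm_num) |>.mp sC2; linarith [sub_eq_zero.mp this]
  have hB12e : B₁ = B₂ := by nlinarith [sAm]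
  have hB1pos : 0 < B₁ := by linarith
  have hB23e : B₂ = B₃ := by nlinarith [n1, mul_pos hB1pos hB1pos]
  refine ⟨by linarith, by linarith, by linarith, by linarith, hB12e, hB23e⟩
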